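/- For every integer 2 ≤ d ≤ 4 and every real 2 ≤ p ≤ 4: (2/π)·(4/(dp+2)²)·∫_0^{π(d+1)/2} (sin θ / sin(2θ/(dp+2)))² dθ ≤ 1. -/

import Mathlib

open Real MeasureTheory intervalIntegral Set

noncomputable def Tpoly (d : ℕ) : ℝ → ℝ := fun v =>
  if d = 2 then 2*Real.cos (2*v)+1
  else if d = 3 then 2*Real.cos (3*v)+2*Real.cos v
  else 2*Real.cos (4*v)+2*Real.cos (2*v)+1

lemma Tpoly_cont (d : ℕ) : Continuous (Tpoly d) := by
  unfold Tpoly; split_ifs <;> fun_prop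

lemma Tpoly_spec (d : ℕ) (hd2 : 2 ≤ d) (hd4 : d ≤ 4) (v : ℝ) :
    Real.sin (((d:ℝ)+1)*v) = Real.sin v * Tpoly d v := by
  interval_cases d <;> simp only [Tpoly, if_true, if_false] <;> norm_num
  · rw [Real.sin_three_mul, Real.cos_two_mul]
    linear_combination (-4*Real.sin v) * (Real.sin_sq_add_cos_sq v)
  · rw [show (4:ℝ)*v = 2*(2*v) by ring, Real.sin_two_mul, Real.sin_two_mul,
      Real.cos_two_mul, Real.cos_three_mul]
    ring
  · rw [show (5:ℝ)*v = 2*v+3*v by ring, Real.sin_add, Real.sin_two_mul,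
      Real.cos_two_mul, Real.sin_three_mul, Real.cos_three_mul,
      show (4:ℝ)*v = 2*(2*v) by ring, Real.cos_two_mul (2*v), Real.cos_two_mul]
    linear_combination (-8*Real.sin v*Real.cos v^2 + 4*Real.sin v) * (Real.sin_sq_add_cos_sq v)

lemma intcos' (c : ℝ) (hc : c ≠ 0) :
    ∫ u in (0:ℝ)..(π/2), Real.cos (c*u) = Real.sin (c*(π/2)) / c := by
  rw [intervalIntegral.integral_comp_mul_left Real.cos hc]
  rw [mul_zero, integral_cos, Real.sin_zero, smul_eq_mul]
  field_simp
  simp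

lemma intcos_even (m : ℕ) (c : ℝ) (hc : c = 2*(m:ℝ)) (hm : m ≠ 0) :
    ∫ u in (0:ℝ)..(π/2), Real.cos (c*u) = 0 := by
  have hc0 : c ≠ 0 := by rw [hc]; positivity
  rw [intcos' c hc0, hc, show (2*(m:ℝ))*(π/2) = (m:ℝ)*π by ring, Real.sin_nat_mul_pi,
    zero_div]

lemma Tpoly_int (d : ℕ) (hd2 : 2 ≤ d) (hd4 : d ≤ 4) :
    ∫ u in (0:ℝ)..(π/2), (Tpoly d u)^2 = ((d:ℝ)+1)*(π/2) := by
  interval_cases d <;> simp only [Tpoly, if_true, if_false] <;> norm_num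
  · have e1 : (∫ u in (0:ℝ)..(π/2), (2*Real.cos (2*u)+1)^2)
        = ∫ u in (0:ℝ)..(π/2), ((3:ℝ) + (2*Real.cos (4*u) + 4*Real.cos (2*u))) := by
      apply integral_congr
      intro u _
      show _ = _
      simp only []
      rw [show (4:ℝ)*u = 2*(2*u) by ring, Real.cos_two_mul (2*u), Real.cos_two_mul]
      ring
    rw [e1, intervalIntegral.integral_add (by apply Continuous.intervalIntegrable; fun_prop) (by apply Continuous.intervalIntegrable; fun_prop),
      intervalIntegral.integral_add (by apply Continuous.intervalIntegrable; fun_prop) (by apply Continuous.intervalIntegrable; fun_prop),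
      intervalIntegral.integral_const, intervalIntegral.integral_const_mul, intervalIntegral.integral_const_mul,
      intcos_even 2 4 (by norm_num) (by norm_num),
      intcos_even 1 2 (by norm_num) (by norm_num)]
    simp; ring
  · have e1 : (∫ u in (0:ℝ)..(π/2), (2*Real.cos (3*u)+2*Real.cos u)^2)
        = ∫ u in (0:ℝ)..(π/2), ((4:ℝ) + (2*Real.cos (6*u) + (4*Real.cos (4*u) + 6*Real.cos (2*u)))) := by
      apply integral_congr
      intro u _
      show _ = _
      simp only []
      rw [show (6:ℝ)*u = 2*(3*u) by ring, Real.cos_two_mul (3*u),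
        show (4:ℝ)*u = 2*(2*u) by ring, Real.cos_two_mul (2*u),
        Real.cos_two_mul, Real.cos_three_mul]
      ring
    rw [e1, intervalIntegral.integral_add (by apply Continuous.intervalIntegrable; fun_prop) (by apply Continuous.intervalIntegrable; fun_prop),
      intervalIntegral.integral_add (by apply Continuous.intervalIntegrable; fun_prop) (by apply Continuous.intervalIntegrable; fun_prop),
      intervalIntegral.integral_add (by apply Continuous.intervalIntegrable; fun_prop) (by apply Continuous.intervalIntegrable; fun_prop),
      intervalIntegral.integral_const, intervalIntegral.integral_const_mul, intervalIntegral.integral_const_mul, intervalIntegral.integral_const_mul,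
      intcos_even 3 6 (by norm_num) (by norm_num),
      intcos_even 2 4 (by norm_num) (by norm_num),
      intcos_even 1 2 (by norm_num) (by norm_num)]
    simp; ring
  · have e1 : (∫ u in (0:ℝ)..(π/2), (2*Real.cos (4*u)+2*Real.cos (2*u)+1)^2)
        = ∫ u in (0:ℝ)..(π/2), ((5:ℝ) + (2*Real.cos (8*u) + (4*Real.cos (6*u) + (6*Real.cos (4*u) + 8*Real.cos (2*u))))) := by
      apply integral_congr
      intro u _
      show _ = _
      simp only []
      rw [show (8:ℝ)*u = 2*(4*u) by ring, Real.cos_two_mul (4*u),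
        show (6:ℝ)*u = 2*(3*u) by ring, Real.cos_two_mul (3*u),
        show (4:ℝ)*u = 2*(2*u) by ring, Real.cos_two_mul (2*u),
        Real.cos_two_mul, Real.cos_three_mul]
      ring
    rw [e1, intervalIntegral.integral_add (by apply Continuous.intervalIntegrable; fun_prop) (by apply Continuous.intervalIntegrable; fun_prop),
      intervalIntegral.integral_add (by apply Continuous.intervalIntegrable; fun_prop) (by apply Continuous.intervalIntegrable; fun_prop),
      intervalIntegral.integral_add (by apply Continuous.intervalIntegrable; fun_prop) (by apply Continuous.intervalIntegrable; fun_prop),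
      intervalIntegral.integral_add (by apply Continuous.intervalIntegrable; fun_prop) (by apply Continuous.intervalIntegrable; fun_prop),
      intervalIntegral.integral_const, intervalIntegral.integral_const_mul, intervalIntegral.integral_const_mul, intervalIntegral.integral_const_mul, intervalIntegral.integral_const_mul,
      intcos_even 4 8 (by norm_num) (by norm_num),
      intcos_even 3 6 (by norm_num) (by norm_num),
      intcos_even 2 4 (by norm_num) (by norm_num),
      intcos_even 1 2 (by norm_num) (by norm_num)]
    simp; ring

lemma sinratio {a b : ℝ} (ha : 0 < a) (hab : a ≤ b) (hb : b ≤ π) :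
    a * Real.sin b ≤ b * Real.sin a := by
  have hb0 : 0 < b := lt_of_lt_of_le ha hab
  have h1 : (0:ℝ) ∈ Icc 0 π := ⟨le_rfl, Real.pi_pos.le⟩
  have h2 : b ∈ Icc 0 π := ⟨hb0.le, hb⟩
  have w1 : (0:ℝ) ≤ 1 - a/b := by
    have : a / b ≤ 1 := (div_le_one hb0).2 hab
    linarith
  have w2 : (0:ℝ) ≤ a/b := by positivity
  have w3 : (1 - a/b) + a/b = 1 := by ring
  have key := strictConcaveOn_sin_Icc.concaveOn.2 h1 h2 w1 w2 w3
  simp only [smul_eq_mul, mul_zero, Real.sin_zero, zero_add] at key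
  rw [div_mul_cancel₀ _ hb0.ne'] at key
  have := mul_le_mul_of_nonneg_left key hb0.le
  calc a * Real.sin b = b * (a / b * Real.sin b) := by field_simp
    _ ≤ b * Real.sin a := this

theorem stmt18 (d : ℕ) (hd2 : 2 ≤ d) (hd4 : d ≤ 4) (p : ℝ) (hp2 : 2 ≤ p) (hp4 : p ≤ 4) :
    (2 / Real.pi) * (4 / ((d : ℝ) * p + 2) ^ 2) *
      ∫ θ in (0 : ℝ)..(Real.pi * (d + 1) / 2),
        (Real.sin θ / Real.sin (2 * θ / ((d : ℝ) * p + 2))) ^ 2 ≤ 1 := by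
  have hπ : (0:ℝ) < π := Real.pi_pos
  set N : ℝ := (d:ℝ)*p+2 with hNdef
  set n : ℝ := (d:ℝ)+1 with hndef
  set L : ℝ := π*n/2 with hLdef
  set M : ℝ := 2*n with hMdef
  have hd2' : (2:ℝ) ≤ (d:ℝ) := by exact_mod_cast hd2
  have hn0 : 0 < n := by rw [hndef]; linarith
  have hMpos : 0 < M := by rw [hMdef]; linarith
  have hMN : M ≤ N := by
    rw [hMdef, hndef, hNdef]
    nlinarith [mul_le_mul_of_nonneg_left hp2 (by linarith : (0:ℝ) ≤ (d:ℝ))]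
  have hNpos : 0 < N := lt_of_lt_of_le hMpos hMN
  have hL : (0:ℝ) ≤ L := by rw [hLdef]; positivity
  -- pointwise comparison
  have hpt : ∀ θ ∈ Icc (0:ℝ) L,
      (4/N^2) * (Real.sin θ / Real.sin (2*θ/N))^2
        ≤ (4/M^2) * (Real.sin θ / Real.sin (2*θ/M))^2 := by
    rintro θ ⟨h0, hL'⟩
    rcases eq_or_lt_of_le h0 with h0' | h0'
    · rw [← h0']; simp
    · set a := 2*θ/N with hadef
      set b := 2*θ/M with hbdef
      have ha : 0 < a := by rw [hadef]; positivity
      have hb0 : 0 < b := by rw [hbdef]; positivity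
      have hab : a ≤ b := div_le_div_of_nonneg_left (by linarith) hMpos hMN
      have hb2 : b ≤ π/2 := by
        rw [hbdef, div_le_iff₀ hMpos, hMdef]
        rw [hLdef] at hL'
        nlinarith
      have hbπ : b ≤ π := by linarith
      have hsinb : 0 < Real.sin b :=
        Real.sin_pos_of_pos_of_lt_pi hb0 (by linarith)
      have key := sinratio ha hab hbπ
      have h2θ : 0 < 2*θ := by linarith
      have hNa : M * Real.sin b ≤ N * Real.sin a := by
        have e1 : M * Real.sin b = (N*M/(2*θ)) * (a * Real.sin b) := by
          rw [hadef]; field_simp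
        have e2 : N * Real.sin a = (N*M/(2*θ)) * (b * Real.sin a) := by
          rw [hbdef]; field_simp
        rw [e1, e2]
        apply mul_le_mul_of_nonneg_left key (by positivity)
      have hMb : 0 < M * Real.sin b := by positivity
      have rew : ∀ c t : ℝ, (4/c^2) * (Real.sin θ / t)^2 = (2*Real.sin θ)^2/(c*t)^2 := by
        intro c t
        rw [div_pow, div_mul_div_comm, mul_pow]
        congr 1 <;> ring
      rw [rew N (Real.sin a), rew M (Real.sin b)]
      apply div_le_div_of_nonneg_left (sq_nonneg _) (by positivity)
      exact pow_le_pow_left₀ hMb.le hNa 2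
  by_cases hInt : IntervalIntegrable (fun θ => (Real.sin θ / Real.sin (2*θ/N))^2) volume 0 L
  · -- the p = 2 comparison function
    set g : ℝ → ℝ := fun θ => (Tpoly d (θ/n))^2 with hgdef
    have hgc : Continuous g := ((Tpoly_cont d).comp (continuous_id.div_const n)).pow 2
    have hgInt : IntervalIntegrable g volume 0 L := hgc.intervalIntegrable 0 L
    have hfg : ∀ θ ∈ Ioc (0:ℝ) L, (Real.sin θ / Real.sin (2*θ/M))^2 = g θ := by
      rintro θ ⟨h0, h1⟩
      have hv0 : 0 < θ/n := by positivity
      have hv2 : θ/n ≤ π/2 := by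
        rw [div_le_iff₀ hn0]
        rw [hLdef] at h1; linarith [h1]
      have hsv : Real.sin (θ/n) ≠ 0 :=
        (Real.sin_pos_of_pos_of_lt_pi hv0 (by linarith)).ne'
      have hb : 2*θ/M = θ/n := by
        rw [hMdef]; exact mul_div_mul_left θ n two_ne_zero
      have hs : Real.sin θ = Real.sin (θ/n) * Tpoly d (θ/n) := by
        have e : ((d:ℝ)+1)*(θ/n) = θ := by rw [← hndef]; field_simp
        have hs0 := Tpoly_spec d hd2 hd4 (θ/n)
        rwa [e] at hs0
      rw [hb, hs, mul_div_cancel_left₀ _ hsv]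
    have haeeq : (fun θ => (Real.sin θ / Real.sin (2*θ/M))^2)
        =ᵐ[volume.restrict (Set.uIoc (0:ℝ) L)] g := by
      rw [uIoc_of_le hL]
      filter_upwards [ae_restrict_mem measurableSet_Ioc] with θ hθ using hfg θ hθ
    have hfMInt : IntervalIntegrable (fun θ => (Real.sin θ / Real.sin (2*θ/M))^2) volume 0 L :=
      hgInt.congr_ae haeeq.symm
    have hmono := intervalIntegral.integral_mono_on (μ := volume) hL
      (hInt.const_mul (4/N^2)) (hfMInt.const_mul (4/M^2)) hpt
    have hval : (∫ θ in (0:ℝ)..L, (Real.sin θ / Real.sin (2*θ/M))^2) = n * (n*(π/2)) := by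
      rw [intervalIntegral.integral_congr_ae
        (Filter.Eventually.of_forall fun x hx => hfg x (by rwa [uIoc_of_le hL] at hx))]
      rw [hgdef]
      rw [intervalIntegral.integral_comp_div (fun u => (Tpoly d u)^2) hn0.ne']
      rw [zero_div, show L/n = π/2 by rw [hLdef]; field_simp]
      rw [Tpoly_int d hd2 hd4, smul_eq_mul, ← hndef]
    calc (2/π) * (4/N^2) * ∫ θ in (0:ℝ)..L, (Real.sin θ / Real.sin (2*θ/N))^2
        = (2/π) * ∫ θ in (0:ℝ)..L, (4/N^2) * (Real.sin θ / Real.sin (2*θ/N))^2 := by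
          rw [intervalIntegral.integral_const_mul]; ring
      _ ≤ (2/π) * ∫ θ in (0:ℝ)..L, (4/M^2) * (Real.sin θ / Real.sin (2*θ/M))^2 := by
          apply mul_le_mul_of_nonneg_left hmono (by positivity)
      _ = (2/π) * ((4/M^2) * (n * (n*(π/2)))) := by
          rw [intervalIntegral.integral_const_mul, hval]
      _ = 1 := by rw [hMdef]; field_simp; ring
  · rw [intervalIntegral.integral_undef hInt]
    simp
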